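/- For penalty levels λ₁ ≥ 0 and λ₂ > 0, the minimizer (β*, δ*) of (β,δ) ↦ (z − β − δ)² + λ₂β² + λ₁|δ| over ℝ² satisfies β* + δ* = (1−k)z + k·sign(z)·max(|z| − λ₁/(2k), 0), where k = λ₂/(1+λ₂). -/
import Mathlib


/-- For penalty levels `lam1 ≥ 0` and `lam2 > 0`, any minimizer `(β*, δ*)` of
`(β,δ) ↦ (z − β − δ)² + lam2 β² + lam1 |δ|` over `ℝ²` satisfies
`β* + δ* = (1−k) z + k ⬝ sign z ⬝ max (|z| − lam1/(2k)) 0` with `k = lam2/(1+lam2)`. -/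
theorem lava_one_dim_solution (z lam1 lam2 : ℝ) (hlam1 : 0 ≤ lam1) (hlam2 : 0 < lam2)
    (k : ℝ) (hk : k = lam2 / (1 + lam2)) (βs δs : ℝ)
    (hmin : ∀ β δ : ℝ,
      (z - βs - δs)^2 + lam2 * βs^2 + lam1 * |δs| ≤ (z - β - δ)^2 + lam2 * β^2 + lam1 * |δ|) :
    βs + δs = (1 - k) * z + k * Real.sign z * max (|z| - lam1 / (2 * k)) 0 := by
  have h1 : (0:ℝ) < 1 + lam2 := by linarith
  have hkpos : 0 < k := by rw [hk]; positivity
  -- Step 1: βs is the minimizer in β for fixed δs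
  have hβ : βs = (z - δs) / (1 + lam2) := by
    have h := hmin ((z - δs) / (1 + lam2)) δs
    have h2 : (1 + lam2) * (βs - (z - δs) / (1 + lam2))^2 ≤ 0 := by
      have e : (z - (z - δs) / (1 + lam2) - δs)^2 + lam2 * ((z - δs) / (1 + lam2))^2
          + (1 + lam2) * (βs - (z - δs) / (1 + lam2))^2
          = (z - βs - δs)^2 + lam2 * βs^2 := by
        field_simp
        ring
      nlinarith [h, e]
    have h3 : (βs - (z - δs) / (1 + lam2))^2 = 0 := by
      nlinarith [sq_nonneg (βs - (z - δs) / (1 + lam2))]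
    have := pow_eq_zero_iff (n := 2) (by norm_num) |>.mp h3
    linarith [this]
  -- Step 2: δs minimizes the profiled objective
  have hprof : ∀ δ : ℝ, k * (z - δs)^2 + lam1 * |δs| ≤ k * (z - δ)^2 + lam1 * |δ| := by
    intro δ
    have h := hmin ((z - δ) / (1 + lam2)) δ
    have eL : (z - βs - δs)^2 + lam2 * βs^2 = k * (z - δs)^2 := by
      rw [hβ, hk]; field_simp; ring
    have eR : (z - (z - δ) / (1 + lam2) - δ)^2 + lam2 * ((z - δ) / (1 + lam2))^2
        = k * (z - δ)^2 := by
      rw [hk]; field_simp; ring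
    linarith
  set t : ℝ := lam1 / (2 * k) with ht
  have httnn : 0 ≤ t := by positivity
  have hlam1' : lam1 = 2 * k * t := by rw [ht]; field_simp
  -- Step 3: identify δs
  have hδ : δs = Real.sign z * max (|z| - t) 0 := by
    rcases le_or_gt (|z|) t with hle | hgt
    · have hmax : max (|z| - t) 0 = 0 := max_eq_right (by linarith)
      rw [hmax, mul_zero]
      have h := hprof 0
      simp only [abs_zero, mul_zero, add_zero] at h
      have habs : z * δs ≤ |z| * |δs| := by rw [← abs_mul]; exact le_abs_self _
      have h5 : k * δs^2 ≤ 0 := by nlinarith [abs_nonneg δs, mul_nonneg (mul_nonneg hkpos.le (sub_nonneg.2 hle)) (abs_nonneg δs)]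
      have h4 : δs^2 = 0 := le_antisymm (by nlinarith) (sq_nonneg δs)
      exact pow_eq_zero_iff (n := 2) (by norm_num) |>.mp h4
    · have hz : z ≠ 0 := by
        intro h; rw [h] at hgt; simp at hgt; linarith
      have hmax : max (|z| - t) 0 = |z| - t := max_eq_left (by linarith)
      rcases lt_or_gt_of_ne hz with hneg | hpos
      · have hsign : Real.sign z = -1 := Real.sign_of_neg hneg
        have habsz : |z| = -z := abs_of_neg hneg
        rw [hmax, hsign, habsz]
        have h := hprof (z + t)
        have habsd : |z + t| = -(z + t) := by
          rw [abs_of_nonpos]; rw [habsz] at hgt; linarith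
        rw [habsd, hlam1'] at h
        have hkey : k * (δs - (z + t))^2 + 2 * k * t * (|δs| + δs) ≤ 0 := by nlinarith [h]
        have h2 : (δs - (z + t))^2 = 0 := le_antisymm (by
          nlinarith [mul_nonneg (mul_nonneg (mul_nonneg (by norm_num : (0:ℝ) ≤ 2) hkpos.le) httnn)
              (by linarith [neg_abs_le δs] : (0:ℝ) ≤ |δs| + δs)]) (sq_nonneg _)
        have := pow_eq_zero_iff (n := 2) (by norm_num) |>.mp h2
        linarith [this]
      · have hsign : Real.sign z = 1 := Real.sign_of_pos hpos
        have habsz : |z| = z := abs_of_pos hpos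
        rw [hmax, hsign, habsz]
        have h := hprof (z - t)
        have habsd : |z - t| = z - t := by
          rw [abs_of_nonneg]; rw [habsz] at hgt; linarith
        rw [habsd, hlam1'] at h
        have hkey : k * (δs - (z - t))^2 + 2 * k * t * (|δs| - δs) ≤ 0 := by nlinarith [h]
        have h2 : (δs - (z - t))^2 = 0 := le_antisymm (by
          nlinarith [mul_nonneg (mul_nonneg (mul_nonneg (by norm_num : (0:ℝ) ≤ 2) hkpos.le) httnn)
              (by linarith [le_abs_self δs] : (0:ℝ) ≤ |δs| - δs)]) (sq_nonneg _)
        have := pow_eq_zero_iff (n := 2) (by norm_num) |>.mp h2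
        linarith [this]
  rw [hβ, hδ, hk]
  field_simp
  ring
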